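/- With notation as above (Aᵢ' = aᵢA₀ + hAᵢ, A₀' = A₀, E = ΣAᵢ, E' = ΣAᵢ', h ∉ {0,1}, e := a₁+⋯+aₙ+1−h ≠ 0, aᵢ ≠ 0), the vector B₁ := −(e/a₁)A₁ + E lies in both span{A₁, E} and span{A₁', E'}, hence the projective lines π(span{A₁,E}) and π(span{A₁',E'}) meet at π(B₁); moreover π(B₁) lies on the hyperplane {(1−h)x⁰ + aₖxᵏ = 0}. -/

import Mathlib

/-- with A₀' = A₀, Aᵢ' = aᵢA₀ + hAᵢ, E = ΣAᵢ, E' = ΣAᵢ',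
e := a₁+⋯+aₙ+1−h ≠ 0, the vector B₁ = −(e/a₁)A₁ + E lies in span{A₁,E} and in
span{A₁',E'}, so the lines A₁E and A₁'E' meet at π(B₁); moreover π(B₁) lies on the
hyperplane (1−h)x⁰ + aₖxᵏ = 0.  (A₀,…,Aₙ is the standard basis of ℝ^{n+1}.) -/
theorem stmt_15 (n : ℕ) (hn : 2 ≤ n) (h : ℝ) (hh0 : h ≠ 0) (hh1 : h ≠ 1)
    (a : Fin n → ℝ) (ha : ∀ k, a k ≠ 0)
    (ec : ℝ) (hec : ec = (∑ k, a k) + 1 - h) (hecne : ec ≠ 0)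
    (e : Fin (n + 1) → (Fin (n + 1) → ℝ)) (he : ∀ i, e i = Pi.single i 1)
    (A' : Fin n → (Fin (n + 1) → ℝ)) (hA' : ∀ i, A' i = a i • e 0 + h • e i.succ)
    (E E' B1 : Fin (n + 1) → ℝ)
    (hE : E = ∑ i, e i) (hE' : E' = e 0 + ∑ i : Fin n, A' i)
    (i1 : Fin n) (hi1 : i1 = ⟨0, by omega⟩)
    (hB1 : B1 = -(ec / a i1) • e i1.succ + E) :
    B1 ≠ 0 ∧
    B1 ∈ Submodule.span ℝ {e i1.succ, E} ∧
    B1 ∈ Submodule.span ℝ {A' i1, E'} ∧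
    (1 - h) * B1 0 + ∑ k : Fin n, a k * B1 k.succ = 0 := by
  -- coordinates of B1
  have hB1c : ∀ j, B1 j = -(ec / a i1) * (if j = i1.succ then 1 else 0) + 1 := by
    intro j
    simp only [hB1, hE, Pi.add_apply, Pi.smul_apply, he, smul_eq_mul,
      Finset.sum_apply, Pi.single_apply, Finset.sum_ite_eq, Finset.mem_univ, if_true]
  have hB10 : B1 0 = 1 := by
    rw [hB1c 0]
    have : (0 : Fin (n+1)) ≠ i1.succ := (Fin.succ_ne_zero i1).symm
    simp [this]
  have hB1i1 : B1 i1.succ = 1 - ec / a i1 := by rw [hB1c i1.succ]; simp; ring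
  have hB1k : ∀ k : Fin n, k ≠ i1 → B1 k.succ = 1 := by
    intro k hk
    rw [hB1c k.succ]
    have : k.succ ≠ i1.succ := by simpa [Fin.succ_inj] using hk
    simp [this]
  -- E' = ec • e 0 + h • E
  have hE'eq : E' = ec • e 0 + h • E := by
    rw [hE', hE, hec]
    simp only [hA']
    rw [Fin.sum_univ_succ]
    simp only [Finset.sum_add_distrib, ← Finset.sum_smul, ← Finset.smul_sum]
    module
  refine ⟨?_, ?_, ?_, ?_⟩
  · intro h0
    have := hB10
    rw [h0] at this
    simp at this
  · rw [hB1]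
    exact add_mem (Submodule.smul_mem _ _ (Submodule.subset_span (by simp)))
      (Submodule.subset_span (by simp))
  · have key : B1 = (-(ec / (h * a i1))) • A' i1 + (1 / h) • E' := by
      rw [hB1, hE'eq, hA' i1]
      have h1 : a i1 ≠ 0 := ha i1
      match_scalars <;> field_simp <;> ring
    rw [key]
    exact add_mem (Submodule.smul_mem _ _ (Submodule.subset_span (by simp)))
      (Submodule.smul_mem _ _ (Submodule.subset_span (by simp)))
  · have : ∑ k : Fin n, a k * B1 k.succ
        = ∑ k : Fin n, (a k - if k = i1 then ec else 0) := by
      refine Finset.sum_congr rfl fun k _ => ?_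
      by_cases hk : k = i1
      · subst hk; rw [hB1i1]; field_simp [ha k]; simp
      · rw [hB1k k hk]; simp [hk]
    rw [hB10, this]
    simp [Finset.sum_sub_distrib, hec]
    ring
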